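/- Let S be a measurable state space, r a bounded reward function, β ∈ (0,1), and define for a fixed policy the one-step τ-quantile Bellman operator (T_π^τ V)(s) = Q_τ[ r(α,s) + β V(s') | s ] acting on bounded functions V : S → ℝ. Then for all bounded V, W: ‖T_π^τ V − T_π^τ W‖_∞ ≤ β ‖V − W‖_∞. -/
import Mathlib
open MeasureTheory

noncomputable def qtl {Ω : Type*} [MeasurableSpace Ω] (P : Measure Ω) (X : Ω → ℝ) (τ : ℝ) : ℝ :=
  sInf {x : ℝ | τ ≤ (P {ω | X ω ≤ x}).toReal}

lemma qtl_le_add {Ω : Type*} [MeasurableSpace Ω] (P : Measure Ω) [IsProbabilityMeasure P]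
    (X Y : Ω → ℝ) (τ : ℝ) (hτ0 : 0 < τ) (hτ1 : τ ≤ 1)
    (MX MY : ℝ) (hX : ∀ ω, |X ω| ≤ MX) (hY : ∀ ω, |Y ω| ≤ MY)
    (d : ℝ) (hd : ∀ ω, X ω ≤ Y ω + d) :
    qtl P X τ ≤ qtl P Y τ + d := by
  have bddX : BddBelow {x : ℝ | τ ≤ (P {ω | X ω ≤ x}).toReal} := by
    refine ⟨-MX, fun x hx => ?_⟩
    by_contra h
    push_neg at h
    have : {ω | X ω ≤ x} = ∅ := by
      ext ω; simp only [Set.mem_setOf_eq, Set.mem_empty_iff_false, iff_false, not_le]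
      have := (abs_le.mp (hX ω)).1
      linarith
    rw [Set.mem_setOf_eq, this, measure_empty] at hx
    simp at hx; linarith
  have neY : Set.Nonempty {x : ℝ | τ ≤ (P {ω | Y ω ≤ x}).toReal} := by
    refine ⟨MY, ?_⟩
    have : {ω | Y ω ≤ MY} = Set.univ := by
      ext ω; simp [(abs_le.mp (hY ω)).2]
    rw [Set.mem_setOf_eq, this, measure_univ]
    simpa using hτ1
  have key : ∀ y ∈ {x : ℝ | τ ≤ (P {ω | Y ω ≤ x}).toReal},
      qtl P X τ ≤ y + d := by
    intro y hy
    apply csInf_le bddX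
    have hsub : {ω | Y ω ≤ y} ⊆ {ω | X ω ≤ y + d} := by
      intro ω hω
      simp only [Set.mem_setOf_eq] at *
      linarith [hd ω]
    have := measure_mono (μ := P) hsub
    exact le_trans hy ((ENNReal.toReal_le_toReal (measure_ne_top _ _) (measure_ne_top _ _)).mpr this)
  have : qtl P X τ - d ≤ qtl P Y τ := by
    apply le_csInf neY
    intro y hy
    linarith [key y hy]
  linarith

lemma qtl_lipschitz {Ω : Type*} [MeasurableSpace Ω] (P : Measure Ω) [IsProbabilityMeasure P]
    (X Y : Ω → ℝ) (τ : ℝ) (hτ0 : 0 < τ) (hτ1 : τ ≤ 1)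
    (MX MY : ℝ) (hX : ∀ ω, |X ω| ≤ MX) (hY : ∀ ω, |Y ω| ≤ MY)
    (d : ℝ) (hd : ∀ ω, |X ω - Y ω| ≤ d) :
    |qtl P X τ - qtl P Y τ| ≤ d := by
  rw [abs_le]
  constructor
  · have := qtl_le_add P Y X τ hτ0 hτ1 MY MX hY hX d
      (fun ω => by linarith [(abs_le.mp (hd ω)).1])
    linarith
  · have := qtl_le_add P X Y τ hτ0 hτ1 MX MY hX hY d
      (fun ω => by linarith [(abs_le.mp (hd ω)).2])
    linarith

/-- The one-step τ-quantile Bellman operator for a fixed policy is a `β`-contraction in the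
sup norm.  For each state `s`, `P s` is the joint law of the randomness (action drawn from the
policy and transition), `rv s ω` the (bounded) reward and `ns s ω` the next state; the operator
is `(T V)(s) = Q_τ[ r + β V(s') | s ]`. -/
theorem quantile_bellman_contraction {S Ω : Type*} [MeasurableSpace Ω]
    (P : S → Measure Ω) [∀ s, IsProbabilityMeasure (P s)]
    (rv : S → Ω → ℝ) (Mr : ℝ) (hr : ∀ s ω, |rv s ω| ≤ Mr)
    (ns : S → Ω → S)
    (β τ : ℝ) (hβ : β ∈ Set.Ioo (0 : ℝ) 1) (hτ : τ ∈ Set.Ioo (0 : ℝ) 1)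
    (V W : S → ℝ) (hV : ∃ M : ℝ, ∀ s, |V s| ≤ M) (hW : ∃ M : ℝ, ∀ s, |W s| ≤ M)
    (c : ℝ) (hc : ∀ s, |V s - W s| ≤ c) :
    ∀ s, |qtl (P s) (fun ω => rv s ω + β * V (ns s ω)) τ
        - qtl (P s) (fun ω => rv s ω + β * W (ns s ω)) τ| ≤ β * c := by
  obtain ⟨MV, hMV⟩ := hV
  obtain ⟨MW, hMW⟩ := hW
  intro s
  apply qtl_lipschitz (P s) _ _ τ hτ.1 hτ.2.le (Mr + β * MV) (Mr + β * MW)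
  · intro ω
    calc |rv s ω + β * V (ns s ω)| ≤ |rv s ω| + |β * V (ns s ω)| := abs_add_le _ _
    _ ≤ Mr + β * MV := by
        rw [abs_mul, abs_of_pos hβ.1]
        exact add_le_add (hr s ω) (mul_le_mul_of_nonneg_left (hMV _) hβ.1.le)
  · intro ω
    calc |rv s ω + β * W (ns s ω)| ≤ |rv s ω| + |β * W (ns s ω)| := abs_add_le _ _
    _ ≤ Mr + β * MW := by
        rw [abs_mul, abs_of_pos hβ.1]
        exact add_le_add (hr s ω) (mul_le_mul_of_nonneg_left (hMW _) hβ.1.le)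
  · intro ω
    have : rv s ω + β * V (ns s ω) - (rv s ω + β * W (ns s ω)) = β * (V (ns s ω) - W (ns s ω)) := by ring
    rw [this, abs_mul, abs_of_pos hβ.1]
    exact mul_le_mul_of_nonneg_left (hc _) hβ.1.le
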